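/- Let 𝔏 be a Lie conformal algebra over a field k of characteristic zero, generated by a subset 𝒢 with weight function wt : 𝒢 → ℕ, and let 𝔏'_i be the associated filtration. Then for all i, j ∈ ℤ and n ∈ ℕ one has 𝔏'_i [n] 𝔏'_j ⊆ 𝔏'_{i+j+n}, and D 𝔏'_i ⊆ 𝔏'_{i−1}. -/
import Mathlib


open Finset

/-- A (bundled) conformal algebra over a field `𝕜`. -/
structure ConfAlg (𝕜 : Type) [Field 𝕜] where
  A : Type
  [ag : AddCommGroup A]
  [mo : Module 𝕜 A]
  mul : ℕ → A →ₗ[𝕜] A →ₗ[𝕜] A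
  D : A →ₗ[𝕜] A
  dmul_zero : ∀ a b : A, mul 0 (D a) b = 0
  dmul_succ : ∀ (n : ℕ) (a b : A), mul (n + 1) (D a) b = (-(n + 1 : 𝕜)) • mul n a b
  leibniz : ∀ (n : ℕ) (a b : A), D (mul n a b) = mul n (D a) b + mul n a (D b)
  loc : ∀ a b : A, ∃ N : ℕ, ∀ n : ℕ, N ≤ n → mul n a b = 0

attribute [instance] ConfAlg.ag ConfAlg.mo

variable {𝕜 : Type} [Field 𝕜]

/-- Divided power of the derivation: `D^{(s)} = D^s / s!`. -/
noncomputable def ConfAlg.dpow (C : ConfAlg 𝕜) (s : ℕ) (a : C.A) : C.A :=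
  (s.factorial : 𝕜)⁻¹ • (C.D ^ s) a

/-- Conformal associativity. -/
def ConfAlg.IsAssoc (C : ConfAlg 𝕜) : Prop :=
  ∀ (a b c : C.A) (m n : ℕ),
    C.mul n (C.mul m a b) c =
      ∑ s ∈ Finset.range (m + 1), ((-1 : 𝕜) ^ s * (m.choose s : 𝕜)) •
        C.mul (m - s) a (C.mul (n + s) b c)

/-- Conformal Jacobi identity together with quasi-symmetry. -/
def ConfAlg.IsLie (C : ConfAlg 𝕜) : Prop :=
  (∀ (a b c : C.A) (m n : ℕ),
    C.mul n (C.mul m a b) c =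
      ∑ s ∈ Finset.range (m + 1), ((-1 : 𝕜) ^ s * (m.choose s : 𝕜)) •
        (C.mul (m - s) a (C.mul (n + s) b c) - C.mul (n + s) b (C.mul (m - s) a c))) ∧
  (∀ (a b : C.A) (n N : ℕ), (∀ s : ℕ, N ≤ s → C.mul (n + s) b a = 0) →
    C.mul n a b =
      -∑ s ∈ Finset.range N, ((-1 : 𝕜) ^ (s + n)) • C.dpow s (C.mul (n + s) b a))

/-- Monomials in a family `f` with weights `wt`; `IsMon C f wt w v` means `w`
is a monomial (arbitrary placement of parentheses) of weight `v`. -/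
inductive ConfAlg.IsMon (C : ConfAlg 𝕜) {I : Type} (f : I → C.A) (wt : I → ℕ) : C.A → ℕ → Prop
  | base (i : I) : ConfAlg.IsMon C f wt (f i) (wt i)
  | mul (n : ℕ) {a b : C.A} {wa wb : ℕ} :
      ConfAlg.IsMon C f wt a wa → ConfAlg.IsMon C f wt b wb →
      ConfAlg.IsMon C f wt (C.mul n a b) (wa + wb + n)

/-- `G` generates `C`. -/
def ConfAlg.Generates (C : ConfAlg 𝕜) (G : Set C.A) : Prop :=
  ∀ p : Submodule 𝕜 C.A, G ⊆ ↑p → (∀ a ∈ p, C.D a ∈ p) →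
    (∀ (n : ℕ) (a b : C.A), a ∈ p → b ∈ p → C.mul n a b ∈ p) → ∀ x : C.A, x ∈ p

/-- The filtration `𝔏'_i`. -/
def ConfAlg.Lp (C : ConfAlg 𝕜) {I : Type} (f : I → C.A) (wt : I → ℕ) (i : ℤ) :
    Submodule 𝕜 C.A :=
  Submodule.span 𝕜 {x : C.A | ∃ (m : ℕ) (w : C.A) (v : ℕ),
    C.IsMon f wt w v ∧ x = (C.D ^ m) w ∧ i + m ≤ (v : ℤ)}

/-- The filtration `𝔏_i`. -/
def ConfAlg.Lf (C : ConfAlg 𝕜) {I : Type} (f : I → C.A) (wt : I → ℕ) (i : ℤ) : Set C.A :=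
  {a : C.A | ∃ n : ℕ, (C.D ^ n) a ∈ C.Lp f wt (i - n)}

lemma ConfAlg.mul_pow_D_left (C : ConfAlg 𝕜) (m : ℕ) :
    ∀ (n : ℕ) (a b : C.A), ∃ c : 𝕜,
      C.mul n ((C.D ^ m) a) b = c • C.mul (n - m) a b ∧ (n < m → c = 0) := by
  induction m with
  | zero => exact fun n a b => ⟨1, by simp, by omega⟩
  | succ m ih =>
    intro n a b
    cases n with
    | zero =>
      refine ⟨0, ?_, fun _ => rfl⟩
      rw [pow_succ', Module.End.mul_apply, C.dmul_zero, zero_smul]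
    | succ n =>
      obtain ⟨c, hc, hc0⟩ := ih n a b
      refine ⟨(-(n + 1 : 𝕜)) * c, ?_, fun h => by rw [hc0 (by omega), mul_zero]⟩
      rw [pow_succ', Module.End.mul_apply, C.dmul_succ, hc, smul_smul,
        Nat.succ_sub_succ]

lemma ConfAlg.Lp_mono (C : ConfAlg 𝕜) {I : Type} (f : I → C.A) (wt : I → ℕ)
    {i i' : ℤ} (h : i' ≤ i) : C.Lp f wt i ≤ C.Lp f wt i' := by
  apply Submodule.span_mono
  rintro x ⟨m, w, v, h1, h2, h3⟩
  exact ⟨m, w, v, h1, h2, by omega⟩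

lemma ConfAlg.D_mem_Lp (C : ConfAlg 𝕜) {I : Type} (f : I → C.A) (wt : I → ℕ)
    {i : ℤ} {x : C.A} (hx : x ∈ C.Lp f wt i) : C.D x ∈ C.Lp f wt (i - 1) := by
  induction hx using Submodule.span_induction with
  | mem x hx =>
    obtain ⟨m, w, v, h1, h2, h3⟩ := hx
    subst h2
    refine Submodule.subset_span ⟨m + 1, w, v, h1, ?_, by push_cast; omega⟩
    rw [pow_succ', Module.End.mul_apply]
  | zero => simpa using Submodule.zero_mem _
  | add x y _ _ ihx ihy => rw [map_add]; exact Submodule.add_mem _ ihx ihy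
  | smul c x _ ih => rw [map_smul]; exact Submodule.smul_mem _ _ ih

lemma ConfAlg.key_mul_mem (C : ConfAlg 𝕜) {I : Type} (f : I → C.A) (wt : I → ℕ)
    (m' : ℕ) : ∀ (n m : ℕ) (a b : C.A) (va vb : ℕ),
      C.IsMon f wt a va → C.IsMon f wt b vb →
      C.mul n ((C.D ^ m) a) ((C.D ^ m') b) ∈
        C.Lp f wt ((va : ℤ) + vb + n - m - m') := by
  induction m' with
  | zero =>
    intro n m a b va vb ha hb
    obtain ⟨c, hc, hc0⟩ := C.mul_pow_D_left m n a b
    rw [pow_zero, Module.End.one_apply] at *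
    rw [hc]
    rcases le_or_gt m n with h | h
    · refine Submodule.smul_mem _ _ (Submodule.subset_span
        ⟨0, C.mul (n - m) a b, va + vb + (n - m), ConfAlg.IsMon.mul _ ha hb, by simp, ?_⟩)
      push_cast [Nat.cast_sub h]
      omega
    · rw [hc0 h, zero_smul]; exact Submodule.zero_mem _
  | succ m' ih =>
    intro n m a b va vb ha hb
    have hD : (C.D ^ (m' + 1)) b = C.D ((C.D ^ m') b) := by
      rw [pow_succ', Module.End.mul_apply]
    have hDa : C.D ((C.D ^ m) a) = (C.D ^ (m + 1)) a := by
      rw [pow_succ', Module.End.mul_apply]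
    have hsplit : C.mul n ((C.D ^ m) a) ((C.D ^ (m' + 1)) b) =
        C.D (C.mul n ((C.D ^ m) a) ((C.D ^ m') b)) -
          C.mul n ((C.D ^ (m + 1)) a) ((C.D ^ m') b) := by
      rw [hD, C.leibniz, hDa]; abel
    rw [hsplit]
    have hidx : (va : ℤ) + vb + n - m - (m' + 1 : ℕ) =
        ((va : ℤ) + vb + n - m - m') - 1 := by push_cast; ring
    rw [hidx]
    refine Submodule.sub_mem _ (C.D_mem_Lp f wt (ih n m a b va vb ha hb)) ?_
    have := ih n (m + 1) a b va vb ha hb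
    have hidx2 : (va : ℤ) + vb + n - (m + 1 : ℕ) - m' =
        ((va : ℤ) + vb + n - m - m') - 1 := by push_cast; ring
    rwa [hidx2] at this

/-- `𝔏'_i [n] 𝔏'_j ⊆ 𝔏'_{i+j+n}` and `D 𝔏'_i ⊆ 𝔏'_{i-1}`. -/
theorem filtration_Lp_mul_and_D
    [CharZero 𝕜] (C : ConfAlg 𝕜) (hLie : C.IsLie) (G : Set C.A) (wt : ↥G → ℕ)
    (hgen : C.Generates G) :
    (∀ (i j : ℤ) (n : ℕ) (x y : C.A),
        x ∈ C.Lp (Subtype.val : ↥G → C.A) wt i →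
        y ∈ C.Lp (Subtype.val : ↥G → C.A) wt j →
        C.mul n x y ∈ C.Lp (Subtype.val : ↥G → C.A) wt (i + j + n)) ∧
    (∀ (i : ℤ) (x : C.A), x ∈ C.Lp (Subtype.val : ↥G → C.A) wt i →
        C.D x ∈ C.Lp (Subtype.val : ↥G → C.A) wt (i - 1)) := by
  refine ⟨fun i j n x y hx hy => ?_, fun i x hx => C.D_mem_Lp _ _ hx⟩
  induction hx using Submodule.span_induction with
  | mem x hxm =>
    induction hy using Submodule.span_induction with
    | mem y hym =>
      obtain ⟨m, w, v, h1, h2, h3⟩ := hxm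
      obtain ⟨m', w', v', h1', h2', h3'⟩ := hym
      subst h2 h2'
      exact C.Lp_mono _ _ (by omega) (C.key_mul_mem _ _ m' n m w w' v v' h1 h1')
    | zero => simpa using Submodule.zero_mem _
    | add y z _ _ ihy ihz =>
      rw [map_add]; exact Submodule.add_mem _ ihy ihz
    | smul c y _ ih => rw [map_smul]; exact Submodule.smul_mem _ _ ih
  | zero => simpa using Submodule.zero_mem _
  | add x z hxm hzm ihx ihz =>
    rw [map_add, LinearMap.add_apply]; exact Submodule.add_mem _ ihx ihz
  | smul c x hxm ih =>
    rw [map_smul, LinearMap.smul_apply]; exact Submodule.smul_mem _ _ ih
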